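/- Let B be the unweighted backward shift on l^∞(ℕ) and let λ ∈ ℂ with |λ| > 2. Then the operator I+λB is locally topologically mixing, i.e. there exists a nonzero vector x ∈ l^∞(ℕ) with J_{I+λB}^mix(x) = l^∞(ℕ). -/

import Mathlib

set_option maxHeartbeats 1000000
set_option synthInstance.maxHeartbeats 400000

open Filter Topology
open scoped ENNReal

/-- The unweighted backward shift on `l^∞(ℕ)`, the space of bounded sequences of
complex numbers with the supremum norm. -/
noncomputable def backwardShift : lp (fun _ : ℕ => ℂ) ∞ →L[ℂ] lp (fun _ : ℕ => ℂ) ∞ :=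
  LinearMap.mkContinuous
    { toFun := fun x => ⟨fun n => x (n + 1), memℓp_infty ⟨‖x‖, by
        rintro r ⟨n, rfl⟩
        exact lp.norm_apply_le_norm ENNReal.top_ne_zero x (n + 1)⟩⟩
      map_add' := fun x y => by ext n; exact congrFun rfl n
      map_smul' := fun c x => by ext n; rfl }
    1
    (fun x => by
      rw [one_mul]
      apply lp.norm_le_of_forall_le (norm_nonneg x)
      intro n
      exact lp.norm_apply_le_norm ENNReal.top_ne_zero x (n + 1))

/-- The extended mixing limit set `J_T^mix(x)`: all `y` for which there exists a
sequence `(x_n)` with `x_n → x` and `T^n x_n → y`. -/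
noncomputable def Jmix {X : Type*} [SeminormedAddCommGroup X] [NormedSpace ℂ X]
    (T : X →L[ℂ] X) (x : X) : Set X :=
  {y | ∃ u : ℕ → X, Tendsto u atTop (𝓝 x) ∧ Tendsto (fun n => (T ^ n) (u n)) atTop (𝓝 y)}

/-- The solution of the recursion `w 0 = 0`, `w (k+1) = (z k - w k)/λ`; this gives a right
inverse for `I + λB` at the level of sequences. -/
noncomputable def Rfun (lam : ℂ) (z : ℕ → ℂ) : ℕ → ℂ
  | 0 => 0
  | k + 1 => (z k - Rfun lam z k) / lam

lemma Rfun_bound (lam : ℂ) (hlam : 2 < ‖lam‖) (z : ℕ → ℂ) (M : ℝ)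
    (hz : ∀ k, ‖z k‖ ≤ M) : ∀ k, ‖Rfun lam z k‖ ≤ M / (‖lam‖ - 1) := by
  have hM : 0 ≤ M := le_trans (norm_nonneg _) (hz 0)
  have hpos : (0:ℝ) < ‖lam‖ - 1 := by linarith
  have ha : (‖lam‖ : ℝ) ≠ 0 := by linarith
  have ha1 : (‖lam‖ : ℝ) - 1 ≠ 0 := ne_of_gt hpos
  intro k
  induction k with
  | zero =>
    simp only [Rfun, norm_zero]
    exact div_nonneg hM (le_of_lt hpos)
  | succ k ih =>
    have h1 : ‖z k - Rfun lam z k‖ ≤ M + M / (‖lam‖ - 1) :=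
      (norm_sub_le _ _).trans (add_le_add (hz k) ih)
    calc ‖Rfun lam z (k + 1)‖ = ‖z k - Rfun lam z k‖ / ‖lam‖ := by
          rw [Rfun, norm_div]
      _ ≤ (M + M / (‖lam‖ - 1)) / ‖lam‖ :=
          div_le_div_of_nonneg_right h1 (by linarith)
      _ = M / (‖lam‖ - 1) := by
          rw [div_eq_div_iff (by linarith) ha1]
          have h2 : M / (‖lam‖ - 1) * (‖lam‖ - 1) = M := div_mul_cancel₀ _ ha1
          linear_combination h2

lemma Rfun_memℓp (lam : ℂ) (hlam : 2 < ‖lam‖) (z : lp (fun _ : ℕ => ℂ) ∞) :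
    Memℓp (Rfun lam z) ∞ := by
  apply memℓp_infty
  refine ⟨‖z‖ / (‖lam‖ - 1), ?_⟩
  rintro r ⟨k, rfl⟩
  exact Rfun_bound lam hlam z ‖z‖
    (fun k => lp.norm_apply_le_norm ENNReal.top_ne_zero z k) k

/-- The right inverse of `I + λB` as a map on `l^∞`. -/
noncomputable def Rlp (lam : ℂ) (hlam : 2 < ‖lam‖) (z : lp (fun _ : ℕ => ℂ) ∞) :
    lp (fun _ : ℕ => ℂ) ∞ :=
  ⟨Rfun lam z, Rfun_memℓp lam hlam z⟩

lemma Rlp_norm (lam : ℂ) (hlam : 2 < ‖lam‖) (z : lp (fun _ : ℕ => ℂ) ∞) :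
    ‖Rlp lam hlam z‖ ≤ (‖lam‖ - 1)⁻¹ * ‖z‖ := by
  have hpos : (0:ℝ) < ‖lam‖ - 1 := by linarith
  apply lp.norm_le_of_forall_le (mul_nonneg (le_of_lt (inv_pos.mpr hpos)) (norm_nonneg _))
  intro k
  have := Rfun_bound lam hlam z ‖z‖
    (fun k => lp.norm_apply_le_norm ENNReal.top_ne_zero z k) k
  calc ‖Rlp lam hlam z k‖ ≤ ‖z‖ / (‖lam‖ - 1) := this
    _ = (‖lam‖ - 1)⁻¹ * ‖z‖ := by ring

lemma T_apply (lam : ℂ) (z : lp (fun _ : ℕ => ℂ) ∞) (k : ℕ) :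
    ((1 + lam • backwardShift) z) k = z k + lam * z (k + 1) := rfl

lemma T_Rlp (lam : ℂ) (hlam : 2 < ‖lam‖) (z : lp (fun _ : ℕ => ℂ) ∞) :
    (1 + lam • backwardShift) (Rlp lam hlam z) = z := by
  have hne : lam ≠ 0 := by
    intro h; rw [h, norm_zero] at hlam; linarith
  apply lp.ext
  funext k
  have h : (Rlp lam hlam z : ℕ → ℂ) = Rfun lam z := rfl
  rw [T_apply, h]
  show Rfun lam z k + lam * Rfun lam z (k + 1) = z k
  rw [Rfun]
  field_simp
  ring

lemma iterate_norm (lam : ℂ) (hlam : 2 < ‖lam‖) (y : lp (fun _ : ℕ => ℂ) ∞) :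
    ∀ n, ‖(Rlp lam hlam)^[n] y‖ ≤ ((‖lam‖ - 1)⁻¹) ^ n * ‖y‖ := by
  have hpos : (0:ℝ) < ‖lam‖ - 1 := by linarith
  intro n
  induction n with
  | zero =>
    rw [Function.iterate_zero, id_eq, pow_zero, one_mul]
  | succ n ih =>
    rw [Function.iterate_succ_apply']
    calc ‖Rlp lam hlam ((Rlp lam hlam)^[n] y)‖
        ≤ (‖lam‖ - 1)⁻¹ * ‖(Rlp lam hlam)^[n] y‖ := Rlp_norm lam hlam _
      _ ≤ (‖lam‖ - 1)⁻¹ * (((‖lam‖ - 1)⁻¹) ^ n * ‖y‖) :=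
          mul_le_mul_of_nonneg_left ih (le_of_lt (inv_pos.mpr hpos))
      _ = ((‖lam‖ - 1)⁻¹) ^ (n + 1) * ‖y‖ := by ring

lemma iterate_pow_apply (lam : ℂ) (hlam : 2 < ‖lam‖) (y : lp (fun _ : ℕ => ℂ) ∞) :
    ∀ n, (((1 + lam • backwardShift :
        lp (fun _ : ℕ => ℂ) ∞ →L[ℂ] lp (fun _ : ℕ => ℂ) ∞)) ^ n) ((Rlp lam hlam)^[n] y) = y := by
  intro n
  induction n with
  | zero =>
    rw [Function.iterate_zero, id_eq, pow_zero, ContinuousLinearMap.one_apply]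
  | succ n ih =>
    rw [Function.iterate_succ_apply', pow_succ,
      ContinuousLinearMap.mul_apply, T_Rlp lam hlam]
    exact ih

/-- If `|λ| > 2`, then `I + λB` is locally topologically mixing on `l^∞(ℕ)`: there is a
nonzero vector `x` with `J_{I+λB}^mix(x) = l^∞(ℕ)`. -/
theorem stmt1 (lam : ℂ) (hlam : 2 < ‖lam‖) :
    ∃ x : lp (fun _ : ℕ => ℂ) ∞, x ≠ 0 ∧
      Jmix (1 + lam • backwardShift) x = Set.univ := by
  have hne : lam ≠ 0 := by
    intro h; rw [h, norm_zero] at hlam; linarith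
  have hinv : ‖(-lam⁻¹ : ℂ)‖ ≤ 1 := by
    rw [norm_neg, norm_inv, inv_le_one_iff₀]
    right; linarith
  -- the vector x with x k = (-1/λ)^k
  set x : lp (fun _ : ℕ => ℂ) ∞ :=
    ⟨fun k => (-lam⁻¹) ^ k, memℓp_infty ⟨1, by
      rintro r ⟨k, rfl⟩
      simpa [norm_pow] using pow_le_one₀ (norm_nonneg _) hinv⟩⟩ with hx
  have hxcoe : ∀ k, (x : ℕ → ℂ) k = (-lam⁻¹) ^ k := fun k => rfl
  refine ⟨x, ?_, ?_⟩
  · intro h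
    have h0 : (x : ℕ → ℂ) 0 = 0 := by rw [h]; rfl
    rw [hxcoe] at h0
    simp at h0
  · have hTx : (1 + lam • backwardShift) x = 0 := by
      apply lp.ext
      funext k
      show ((1 + lam • backwardShift) x : ℕ → ℂ) k = 0
      rw [T_apply, hxcoe, hxcoe, pow_succ]
      field_simp
      ring
    have hTnx : ∀ n, 1 ≤ n → ((1 + lam • backwardShift) ^ n) x = 0 := by
      intro n hn
      obtain ⟨m, rfl⟩ := Nat.exists_eq_add_of_le' hn
      rw [pow_succ, ContinuousLinearMap.mul_apply, hTx, map_zero]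
    have hpos : (0:ℝ) < ‖lam‖ - 1 := by linarith
    have hc0 : (0:ℝ) < (‖lam‖ - 1)⁻¹ := inv_pos.mpr hpos
    have hc1 : (‖lam‖ - 1)⁻¹ < 1 := by
      rw [inv_lt_one_iff₀]; right; linarith
    apply Set.eq_univ_iff_forall.mpr
    intro y
    have hv0 : Tendsto (fun n => (Rlp lam hlam)^[n] y) atTop (𝓝 0) := by
      apply squeeze_zero_norm (iterate_norm lam hlam y)
      have := (tendsto_pow_atTop_nhds_zero_of_lt_one (le_of_lt hc0) hc1).mul_const ‖y‖
      simpa using this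
    refine ⟨fun n => x + (Rlp lam hlam)^[n] y, ?_, ?_⟩
    · have h2 : Tendsto (fun n : ℕ => x + (Rlp lam hlam)^[n] y) atTop (𝓝 (x + 0)) :=
        Tendsto.add tendsto_const_nhds hv0
      rw [add_zero] at h2
      exact h2
    · apply Tendsto.congr' (f₁ := fun _ => y) _ tendsto_const_nhds
      filter_upwards [eventually_ge_atTop 1] with n hn
      rw [map_add, hTnx n hn, iterate_pow_apply lam hlam y n, zero_add]
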